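/- arXiv:2111.02490 — 2 statements merged into one kernel-verified Lean document; each statement's English description precedes it below -/
import Mathlib

section
/- Let 𝓕' ⊆ 𝓕 be families of subgroups of a group G, let K and M be cocomplete categories, F : K → M a functor, and C : BG → K a functor. If for every H ∈ 𝓕 the assembly map As_{𝓕'|_H, F(res^G_H C)_H} is an isomorphism, then the relative assembly map As^𝓕_{𝓕', FC_G} : colim_{G_{𝓕'}Orb} FC_G → colim_{G_𝓕Orb} FC_G, induced by the inclusion G_{𝓕'}Orb ⊆ G_𝓕Orb, is an isomorphism. -/
/-!
Statement 15: relative assembly maps are isomorphisms given assembly isomorphisms for the members of the larger family.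

Throughout, `GOrb G` is the orbit category of the group `G` (objects: nonempty transitive
`G`-sets; morphisms: equivariant maps), `GOrb.pt G` its terminal object `G/G`,
`SubgroupFamily G` the families of subgroups, `FamOrb G 𝓕` the full subcategory `G_𝓕Orb`,
`PSh G` the presheaf category, `asm` the assembly map, `jG : BG ⥤ GOrb` the canonical
inclusion (`BG = SingleObj G`), and left Kan extensions are encoded by a functor together
with a natural transformation exhibiting it as a left Kan extension
(`Functor.IsLeftKanExtension`).  Cocompleteness is expressed by `HasColimitsOfSize.{u, u+1}`,
the size of the orbit category and its subcategories.
-/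

open CategoryTheory Limits

universe u v w v' w'

namespace FJ

variable (G : Type u) [Group G]

/-- The orbit category of `G`: objects are (nonempty) transitive `G`-sets, morphisms are
`G`-equivariant maps. -/
structure GOrb : Type (u + 1) where
  α : Type u
  [act : MulAction G α]
  pretrans : MulAction.IsPretransitive G α
  nonempty : Nonempty α

attribute [instance] GOrb.act

variable {G}

/-- Equivariant maps of transitive `G`-sets. -/
@[ext]
structure OrbHom (X Y : GOrb G) : Type u where
  toFun : X.α → Y.α
  map_smul : ∀ (g : G) (x : X.α), toFun (g • x) = g • toFun x

instance : Category.{u} (GOrb G) where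
  Hom X Y := OrbHom X Y
  id X := ⟨_root_.id, fun _ _ => rfl⟩
  comp f g := ⟨g.toFun ∘ f.toFun, fun a x => by
    simp only [Function.comp_apply, f.map_smul, g.map_smul]⟩
  id_comp f := OrbHom.ext rfl
  comp_id f := OrbHom.ext rfl
  assoc f g h := OrbHom.ext rfl

variable (G)

/-- The one-point orbit `G/G`, the terminal object of the orbit category. -/
def GOrb.pt : GOrb G where
  α := PUnit
  pretrans := ⟨fun x y => ⟨1, Subsingleton.elim _ _⟩⟩
  nonempty := ⟨PUnit.unit⟩

variable {G}

/-- The unique morphism to the one-point orbit. -/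
def toPt (X : GOrb G) : X ⟶ GOrb.pt G :=
  ⟨fun _ => PUnit.unit, fun _ _ => rfl⟩

instance (X : GOrb G) : Subsingleton (X ⟶ GOrb.pt G) :=
  ⟨fun f g => OrbHom.ext (funext fun _ => rfl)⟩

variable (G)

/-- A family of subgroups of `G`: a nonempty collection of subgroups closed under conjugation
and under passing to subgroups. -/
structure SubgroupFamily where
  carrier : Set (Subgroup G)
  nonempty : carrier.Nonempty
  conj_mem : ∀ (H : Subgroup G) (g : G),
    H ∈ carrier → H.map (MulAut.conj g).toMonoidHom ∈ carrier
  le_mem : ∀ H K : Subgroup G, H ≤ K → K ∈ carrier → H ∈ carrier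

/-- The full subcategory `G_𝓕Orb` of orbits with stabilizers in the family `𝓕`. -/
abbrev FamOrb (𝓕 : SubgroupFamily G) : Type (u + 1) :=
  ObjectProperty.FullSubcategory (fun X : GOrb G => ∀ x : X.α, MulAction.stabilizer G x ∈ 𝓕.carrier)

/-- The category of `Set`-valued presheaves on the orbit category. -/
abbrev PSh := (GOrb G)ᵒᵖ ⥤ Type u

variable {G}

section Assembly

variable {M : Type v'} [Category.{w'} M]

/-- The cocone over `F` restricted to `G_𝓕Orb` with vertex `F(G/G)`. -/
def asmCocone (𝓕 : SubgroupFamily G) (F : GOrb G ⥤ M) :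
    Cocone (ObjectProperty.ι _ ⋙ F :
      FamOrb G 𝓕 ⥤ M) where
  pt := F.obj (GOrb.pt G)
  ι :=
    { app := fun X => F.map (toPt X.obj)
      naturality := fun X Y f => by
        dsimp
        rw [Category.comp_id, ← F.map_comp]
        exact congrArg F.map (Subsingleton.elim _ _) }

/-- The assembly map `colim_{G_𝓕Orb} F ⟶ F(G/G)`. -/
noncomputable def asm (𝓕 : SubgroupFamily G) (F : GOrb G ⥤ M)
    [HasColimit (ObjectProperty.ι _ ⋙ F : FamOrb G 𝓕 ⥤ M)] :
    colimit (ObjectProperty.ι _ ⋙ F : FamOrb G 𝓕 ⥤ M) ⟶ F.obj (GOrb.pt G) :=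
  colimit.desc _ (asmCocone 𝓕 F)

end Assembly

end FJ

namespace FJ

variable {G : Type u} [Group G]

variable (G) in
/-- The transitive `G`-set `G` (left translation). -/
@[reducible] def selfOrb : GOrb G where
  α := G
  pretrans := ⟨fun x y => ⟨y * x⁻¹, by simp [smul_eq_mul]⟩⟩
  nonempty := ⟨1⟩

/-- The group element underlying a morphism in `BG = SingleObj G`. -/
def un {x y : SingleObj G} (g : x ⟶ y) : G := g

variable (G) in
/-- Right multiplication by `g⁻¹`, as an equivariant self-map of the `G`-set `G`. -/
def rmul (g : G) : selfOrb G ⟶ selfOrb G :=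
  ⟨fun a => a * g⁻¹, fun h a => by simp [smul_eq_mul, mul_assoc]⟩

variable (G) in
/-- The canonical inclusion `j^G : BG ⟶ GOrb`, sending the unique object to the `G`-set `G`. -/
def jG : SingleObj G ⥤ GOrb G where
  obj _ := selfOrb G
  map g := rmul G (un g)
  map_id x := OrbHom.ext (funext fun a => by
    have h1 : un (𝟙 x) = 1 := rfl
    show a * (un (𝟙 x))⁻¹ = a
    rw [h1, inv_one, mul_one])
  map_comp {x y z} f g := OrbHom.ext (funext fun a => by
    have h1 : un (f ≫ g) = un g * un f := rfl
    show a * (un (f ≫ g))⁻¹ = (a * (un f)⁻¹) * (un g)⁻¹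
    rw [h1, mul_inv_rev, mul_assoc])

/-- The functor `Bφ : BH ⟶ BG` induced by a group homomorphism. -/
def Bhom {H : Type v} [Group H] (φ : H →* G) : SingleObj H ⥤ SingleObj G :=
  SingleObj.mapHom H G φ

/-- The family `φ*𝓕 = {K ≤ H ∣ φ(K) ∈ 𝓕}` induced by a group homomorphism. -/
def comapFam {H : Type v} [Group H] (φ : H →* G) (𝓕 : SubgroupFamily G) :
    SubgroupFamily H where
  carrier := {K : Subgroup H | K.map φ ∈ 𝓕.carrier}
  nonempty := by
    obtain ⟨S, hS⟩ := 𝓕.nonempty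
    refine ⟨⊥, ?_⟩
    have hbot : (⊥ : Subgroup H).map φ = ⊥ := by simp
    simp only [Set.mem_setOf_eq, hbot]
    exact 𝓕.le_mem ⊥ S bot_le hS
  conj_mem := fun K h hK => by
    simp only [Set.mem_setOf_eq]
    have heq : (K.map (MulAut.conj h).toMonoidHom).map φ =
        (K.map φ).map (MulAut.conj (φ h)).toMonoidHom := by
      rw [Subgroup.map_map, Subgroup.map_map]
      congr 1
      ext x
      simp [MulAut.conj]
    rw [heq]
    exact 𝓕.conj_mem _ (φ h) hK
  le_mem := fun K L h hL => 𝓕.le_mem _ _ (Subgroup.map_mono h) hL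

end FJ

namespace FJ

variable {G H : Type u} [Group G] [Group H]

/-- The relation defining `G ×_φ S`: `(g·φ(h), s) ∼ (g, h·s)`. -/
def indSetoid (φ : H →* G) (S : GOrb H) : Setoid (G × S.α) where
  r p q := ∃ h : H, p.1 = q.1 * φ h ∧ q.2 = h • p.2
  iseqv := by
    constructor
    · intro p
      exact ⟨1, by simp, by simp⟩
    · rintro p q ⟨h, h1, h2⟩
      refine ⟨h⁻¹, ?_, ?_⟩
      · rw [h1]; simp
      · rw [h2]; simp
    · rintro p q r ⟨h, h1, h2⟩ ⟨k, k1, k2⟩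
      refine ⟨k * h, ?_, ?_⟩
      · rw [h1, k1, map_mul, mul_assoc]
      · rw [k2, h2, mul_smul]

instance indAction (φ : H →* G) (S : GOrb H) : MulAction G (Quotient (indSetoid φ S)) where
  smul g := Quotient.map (fun p => (g * p.1, p.2))
    (by rintro p q ⟨h, h1, h2⟩; exact ⟨h, by dsimp only; rw [h1, mul_assoc], h2⟩)
  one_smul x := by
    induction x using Quotient.ind
    exact congrArg (Quotient.mk _) (by simp)
  mul_smul g g' x := by
    induction x using Quotient.ind
    exact congrArg (Quotient.mk _) (by simp [mul_assoc])

lemma indSmul_mk (φ : H →* G) (S : GOrb H) (g : G) (p : G × S.α) :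
    g • (Quotient.mk (indSetoid φ S) p) = Quotient.mk _ (g * p.1, p.2) := rfl

/-- The induced transitive `G`-set `G ×_φ S`. -/
def indObj (φ : H →* G) (S : GOrb H) : GOrb G where
  α := Quotient (indSetoid φ S)
  pretrans := by
    refine ⟨fun x y => ?_⟩
    induction x using Quotient.ind with | _ p =>
    induction y using Quotient.ind with | _ q =>
    obtain ⟨h, hh⟩ := S.pretrans.exists_smul_eq p.2 q.2
    refine ⟨(q.1 * φ h) * p.1⁻¹, ?_⟩
    rw [indSmul_mk]
    refine Quotient.sound ?_
    exact ⟨h, by dsimp only; rw [inv_mul_cancel_right], by dsimp only; rw [hh]⟩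
  nonempty := ⟨Quotient.mk _ (1, S.nonempty.some)⟩

/-- The induction functor on morphisms. -/
def indMap (φ : H →* G) {S T : GOrb H} (f : S ⟶ T) : indObj φ S ⟶ indObj φ T where
  toFun := Quotient.map (fun p => (p.1, f.toFun p.2))
    (by rintro p q ⟨h, h1, h2⟩; exact ⟨h, h1, by dsimp only; rw [h2, f.map_smul]⟩)
  map_smul := by
    rintro g ⟨p⟩
    rfl

/-- The induction functor `G ×_φ - : HOrb ⥤ GOrb` of a group homomorphism `φ : H → G`. -/
def indOrb (φ : H →* G) : GOrb H ⥤ GOrb G where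
  obj := indObj φ
  map := indMap φ
  map_id S := OrbHom.ext (funext (by rintro ⟨p⟩; rfl))
  map_comp f g := OrbHom.ext (funext (by rintro ⟨p⟩; rfl))

/-- The restriction functor `res_φ : PSh(GOrb) ⥤ PSh(HOrb)`, precomposition with the
induction functor. -/
def resPsh (φ : H →* G) : PSh G ⥤ PSh H :=
  (Functor.whiskeringLeft (GOrb H)ᵒᵖ (GOrb G)ᵒᵖ (Type u)).obj (indOrb φ).op

end FJ

namespace FJ

variable {G : Type u} [Group G] {M : Type v'} [Category.{w'} M]

/-- The relative assembly map
`colim_{G_{𝓕'}Orb} F ⟶ colim_{G_𝓕Orb} F` induced by an inclusion `𝓕' ⊆ 𝓕` of families. -/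
noncomputable def relAsm (𝓕' 𝓕 : SubgroupFamily G)
    (hsub : ∀ S : Subgroup G, S ∈ 𝓕'.carrier → S ∈ 𝓕.carrier) (F : GOrb G ⥤ M)
    [HasColimit (ObjectProperty.ι _ ⋙ F : FamOrb G 𝓕' ⥤ M)]
    [HasColimit (ObjectProperty.ι _ ⋙ F : FamOrb G 𝓕 ⥤ M)] :
    colimit (ObjectProperty.ι _ ⋙ F : FamOrb G 𝓕' ⥤ M) ⟶
      colimit (ObjectProperty.ι _ ⋙ F : FamOrb G 𝓕 ⥤ M) :=
  colimit.desc _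
    { pt := colimit (ObjectProperty.ι _ ⋙ F : FamOrb G 𝓕 ⥤ M)
      ι :=
        { app := fun X => colimit.ι (ObjectProperty.ι _ ⋙ F : FamOrb G 𝓕 ⥤ M)
            ⟨X.obj, fun x => hsub _ (X.property x)⟩
          naturality := fun X Y f => by
            dsimp
            rw [Category.comp_id]
            exact colimit.w (ObjectProperty.ι _ ⋙ F : FamOrb G 𝓕 ⥤ M)
              (show (⟨X.obj, fun x => hsub _ (X.property x)⟩ : FamOrb G 𝓕) ⟶
                ⟨Y.obj, fun x => hsub _ (Y.property x)⟩ from ObjectProperty.homMk f.hom) } }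

end FJ



namespace FJ

section GeneralLemma

lemma isIso_pre_of_locally_iso {A B : Type (u+1)} [Category.{u} A] [Category.{u} B]
    {M : Type v'} [Category.{w'} M] [HasColimitsOfSize.{u, u+1} M]
    (ι : A ⥤ B) (D : B ⥤ M)
    (h : ∀ Y : B, IsIso (colimit.desc (CostructuredArrow.proj ι Y ⋙ (ι ⋙ D))
      (Functor.costructuredArrowMapCocone ι (ι ⋙ D) D (𝟙 (ι ⋙ D)) Y))) :
    IsIso (colimit.pre D ι) := by
  let E := ι.pointwiseLeftKanExtension (ι ⋙ D)
  let η := ι.pointwiseLeftKanExtensionUnit (ι ⋙ D)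
  let β : E ⟶ D := E.descOfIsLeftKanExtension η D (𝟙 (ι ⋙ D))
  have hβapp : ∀ Y, IsIso (β.app Y) := fun Y => by
    have := Functor.pointwiseLeftKanExtension_desc_app ι (ι ⋙ D) D (𝟙 (ι ⋙ D)) Y
    rw [show β.app Y = _ from this]
    exact h Y
  have hβ : IsIso β := NatIso.isIso_of_isIso_app β
  have key : colimit.pre D ι = (E.colimitIsoOfIsLeftKanExtension η).inv ≫ colimMap β := by
    apply colimit.hom_ext
    intro A
    rw [colimit.ι_pre, Functor.ι_colimitIsoOfIsLeftKanExtension_inv_assoc, ι_colimMap,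
      ← Category.assoc, E.descOfIsLeftKanExtension_fac_app η D (𝟙 (ι ⋙ D))]
    simp
  haveI : IsIso (colimMap β) := inferInstanceAs (IsIso (colim.map β))
  rw [key]
  infer_instance

end GeneralLemma

section OrbUtil

variable {G : Type u} [Group G]

lemma OrbHom.comp_toFun {X Y Z : GOrb G} (f : X ⟶ Y) (g : Y ⟶ Z) (x : X.α) :
    (f ≫ g).toFun x = g.toFun (f.toFun x) := rfl

/-- The inverse of a bijective equivariant map. -/
noncomputable def invOrbHom {X Y : GOrb G} (f : X ⟶ Y) (hf : Function.Bijective f.toFun) :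
    Y ⟶ X where
  toFun := (Equiv.ofBijective f.toFun hf).symm
  map_smul := fun g y => hf.injective (by
    have h1 : f.toFun ((Equiv.ofBijective f.toFun hf).symm (g • y)) = g • y :=
      (Equiv.ofBijective f.toFun hf).apply_symm_apply (g • y)
    have h2 : f.toFun ((Equiv.ofBijective f.toFun hf).symm y) = y :=
      (Equiv.ofBijective f.toFun hf).apply_symm_apply y
    rw [h1, f.map_smul, h2])

/-- A bijective equivariant map is an isomorphism. -/
noncomputable def isoOfBijective {X Y : GOrb G} (f : X ⟶ Y) (hf : Function.Bijective f.toFun) :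
    X ≅ Y where
  hom := f
  inv := invOrbHom f hf
  hom_inv_id := OrbHom.ext (funext fun x => (Equiv.ofBijective f.toFun hf).symm_apply_apply x)
  inv_hom_id := OrbHom.ext (funext fun y => (Equiv.ofBijective f.toFun hf).apply_symm_apply y)

lemma selfOrb_hom_apply {X : GOrb G} (f : selfOrb G ⟶ X) (a : G) :
    f.toFun a = a • f.toFun 1 := by
  have := f.map_smul a 1
  simpa [smul_eq_mul] using this

variable (H : Subgroup G)

lemma ind_sound {S : GOrb ↥H} {p q : G × S.α}
    (h : ∃ h : ↥H, p.1 = q.1 * (H.subtype h) ∧ q.2 = h • p.2) :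
    (Quotient.mk (indSetoid H.subtype S) p) = Quotient.mk (indSetoid H.subtype S) q :=
  Quotient.sound h

lemma ind_exact {S : GOrb ↥H} {p q : G × S.α}
    (h : Quotient.mk (indSetoid H.subtype S) p = Quotient.mk (indSetoid H.subtype S) q) :
    ∃ h : ↥H, p.1 = q.1 * (H.subtype h) ∧ q.2 = h • p.2 :=
  Quotient.exact h

lemma ind_mk_one_inj {S : GOrb ↥H} {t t' : S.α}
    (h : Quotient.mk (indSetoid H.subtype S) (1, t) = Quotient.mk (indSetoid H.subtype S) (1, t')) :
    t = t' := by
  obtain ⟨h0, h1, h2⟩ := ind_exact H h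
  have : H.subtype h0 = 1 := by
    rw [one_mul] at h1
    exact h1.symm
  have hh0 : h0 = 1 := by
    apply Subtype.coe_injective
    exact this
  rw [show t' = h0 • t from h2, hh0, one_smul]

lemma indMap_mk {S T : GOrb ↥H} (f : S ⟶ T) (p : G × S.α) :
    (indMap H.subtype f).toFun (Quotient.mk (indSetoid H.subtype S) p) =
      Quotient.mk (indSetoid H.subtype T) (p.1, f.toFun p.2) := rfl

lemma stab_ind_mk {S : GOrb ↥H} (g : G) (t : S.α) :
    MulAction.stabilizer G (Quotient.mk (indSetoid H.subtype S) (g, t)) =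
      ((MulAction.stabilizer ↥H t).map H.subtype).map (MulAut.conj g).toMonoidHom := by
  ext k
  constructor
  · intro hk
    have hk' : (Quotient.mk (indSetoid H.subtype S) (k * g, t)) =
        Quotient.mk (indSetoid H.subtype S) (g, t) := by
      have := MulAction.mem_stabilizer_iff.mp hk
      rw [indSmul_mk] at this
      exact this
    obtain ⟨h, h1, h2⟩ := ind_exact H hk'
    refine Subgroup.mem_map.mpr ⟨H.subtype h, Subgroup.mem_map.mpr ⟨h, ?_, rfl⟩, ?_⟩
    · exact MulAction.mem_stabilizer_iff.mpr h2.symm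
    · have : k = g * H.subtype h * g⁻¹ := by
        rw [← h1]
        group
      rw [this]
      simp [MulAut.conj_apply, mul_assoc]
  · intro hk
    obtain ⟨x, hx, hxk⟩ := Subgroup.mem_map.mp hk
    obtain ⟨h, hh, rfl⟩ := Subgroup.mem_map.mp hx
    rw [MulAction.mem_stabilizer_iff, indSmul_mk]
    apply ind_sound H
    refine ⟨h, ?_, (MulAction.mem_stabilizer_iff.mp hh).symm⟩
    rw [← hxk]
    simp [MulAut.conj_apply, mul_assoc]

lemma ind_prop (𝓕' : SubgroupFamily G) (T : FamOrb ↥H (comapFam H.subtype 𝓕')) :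
    ∀ z : (indObj H.subtype T.obj).α, MulAction.stabilizer G z ∈ 𝓕'.carrier := by
  intro z
  induction z using Quotient.ind with
  | _ p =>
    obtain ⟨g, t⟩ := p
    convert 𝓕'.conj_mem _ g (T.property t) using 1
    exact stab_ind_mk H g t

end OrbUtil

end FJ


namespace FJ

section PhiSec

variable {G : Type u} [Group G]

/-- The inclusion of orbit subcategories induced by an inclusion of families. -/
def famInc (𝓕' 𝓕 : SubgroupFamily G)
    (hsub : ∀ S : Subgroup G, S ∈ 𝓕'.carrier → S ∈ 𝓕.carrier) :
    FamOrb G 𝓕' ⥤ FamOrb G 𝓕 :=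
  ObjectProperty.ιOfLE (fun X h x => hsub _ (h x))

/-- The canonical projection `G ×_H T → X` for `H` the stabilizer of `x0 : X`. -/
def projInd {Xo : GOrb G} (x0 : Xo.α) (T : GOrb ↥(MulAction.stabilizer G x0)) :
    indObj (MulAction.stabilizer G x0).subtype T ⟶ Xo where
  toFun := Quotient.lift (fun p => p.1 • x0) (fun p q hpq => by
    obtain ⟨h, h1, h2⟩ := (hpq :
      ∃ h : ↥(MulAction.stabilizer G x0), p.1 = q.1 * (MulAction.stabilizer G x0).subtype h ∧
        q.2 = h • p.2)
    rw [h1, mul_smul]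
    congr 1
    exact MulAction.mem_stabilizer_iff.mp h.2)
  map_smul := fun a q => by
    induction q using Quotient.ind with
    | _ p => exact mul_smul a p.1 x0

lemma projInd_mk {Xo : GOrb G} (x0 : Xo.α) (T : GOrb ↥(MulAction.stabilizer G x0))
    (p : G × T.α) :
    (projInd x0 T).toFun (Quotient.mk (indSetoid (MulAction.stabilizer G x0).subtype T) p) =
      p.1 • x0 := rfl

lemma projInd_natural {Xo : GOrb G} (x0 : Xo.α) {T T' : GOrb ↥(MulAction.stabilizer G x0)}
    (f : T ⟶ T') :
    indMap (MulAction.stabilizer G x0).subtype f ≫ projInd x0 T' = projInd x0 T :=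
  OrbHom.ext (funext fun z => by
    induction z using Quotient.ind with
    | _ p => rfl)

variable (𝓕' 𝓕 : SubgroupFamily G)
    (hsub : ∀ S : Subgroup G, S ∈ 𝓕'.carrier → S ∈ 𝓕.carrier)
    (X : FamOrb G 𝓕) (x0 : X.obj.α)

/-- The comparison functor from the orbit category of the restricted family to the
comma category over `X`. -/
def Phi : FamOrb ↥(MulAction.stabilizer G x0) (comapFam (MulAction.stabilizer G x0).subtype 𝓕') ⥤
      CostructuredArrow (famInc 𝓕' 𝓕 hsub) X where
  obj T :=
    { left := ⟨indObj (MulAction.stabilizer G x0).subtype T.obj, ind_prop _ 𝓕' T⟩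
      right := ⟨⟨⟩⟩
      hom := ObjectProperty.homMk (projInd x0 T.obj) }
  map {T T'} f :=
    { left := ObjectProperty.homMk (indMap (MulAction.stabilizer G x0).subtype f.hom)
      right := 𝟙 _
      w := ObjectProperty.hom_ext _ (projInd_natural x0 f.hom) }
  map_id T := CostructuredArrow.hom_ext _ _ (ObjectProperty.hom_ext _
    ((indOrb (MulAction.stabilizer G x0).subtype).map_id T.obj))
  map_comp f g := CostructuredArrow.hom_ext _ _ (ObjectProperty.hom_ext _
    ((indOrb (MulAction.stabilizer G x0).subtype).map_comp f.hom g.hom))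

instance Phi_faithful : (Phi 𝓕' 𝓕 hsub X x0).Faithful where
  map_injective {T T'} f g hfg := by
    have hleft : (indMap (MulAction.stabilizer G x0).subtype f.hom) =
        (indMap (MulAction.stabilizer G x0).subtype g.hom) :=
      congrArg (fun m => m.left.hom) hfg
    apply ObjectProperty.hom_ext
    apply OrbHom.ext
    funext t
    apply ind_mk_one_inj (MulAction.stabilizer G x0)
    exact congrArg (fun u => OrbHom.toFun u
      (Quotient.mk (indSetoid (MulAction.stabilizer G x0).subtype T.obj) ((1 : G), t))) hleft

instance Phi_full : (Phi 𝓕' 𝓕 hsub X x0).Full where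
  map_surjective := by
    intro T T' m
    have hover : ∀ z, (projInd x0 T'.obj).toFun ((m.left.hom : OrbHom _ _).toFun z) =
        (projInd x0 T.obj).toFun z := fun z =>
      congrArg (fun u => OrbHom.toFun u.hom z) (CostructuredArrow.w m)
    have hex : ∀ t : T.obj.α, ∃ t' : T'.obj.α,
        (m.left.hom : OrbHom _ _).toFun (Quotient.mk (indSetoid (MulAction.stabilizer G x0).subtype T.obj) ((1 : G), t)) =
          Quotient.mk (indSetoid (MulAction.stabilizer G x0).subtype T'.obj) ((1 : G), t') := by
      intro t
      obtain ⟨⟨g', t'⟩, hrep⟩ := Quotient.exists_rep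
        ((m.left.hom : OrbHom _ _).toFun (Quotient.mk (indSetoid (MulAction.stabilizer G x0).subtype T.obj) ((1 : G), t)))
      have h1 : g' • x0 = x0 := by
        have := hover (Quotient.mk (indSetoid (MulAction.stabilizer G x0).subtype T.obj) ((1 : G), t))
        rw [← hrep] at this
        rw [projInd_mk, projInd_mk] at this
        simpa using this
      refine ⟨(⟨g', h1⟩ : ↥(MulAction.stabilizer G x0)) • t', ?_⟩
      rw [← hrep]
      apply ind_sound
      exact ⟨⟨g', h1⟩, by simp, rfl⟩
    choose ψ hψ using hex
    have hψeq : ∀ (h : ↥(MulAction.stabilizer G x0)) (t : T.obj.α), ψ (h • t) = h • ψ t := by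
      intro h t
      apply ind_mk_one_inj (MulAction.stabilizer G x0)
      rw [← hψ (h • t)]
      have e1 : (Quotient.mk (indSetoid (MulAction.stabilizer G x0).subtype T.obj) ((1 : G), h • t)) =
          Quotient.mk (indSetoid (MulAction.stabilizer G x0).subtype T.obj) ((MulAction.stabilizer G x0).subtype h, t) := by
        apply ind_sound
        exact ⟨h⁻¹, by simp, by simp⟩
      have e2 : (Quotient.mk (indSetoid (MulAction.stabilizer G x0).subtype T.obj) ((MulAction.stabilizer G x0).subtype h, t)) =
          ((MulAction.stabilizer G x0).subtype h) • Quotient.mk (indSetoid (MulAction.stabilizer G x0).subtype T.obj) ((1 : G), t) := by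
        rw [indSmul_mk, mul_one]
      rw [e1, e2]
      refine (((m.left.hom : OrbHom _ _).map_smul _ _).trans
        (congrArg (fun z => (MulAction.stabilizer G x0).subtype h • z) (hψ t))).trans ?_
      show Quotient.mk (indSetoid (MulAction.stabilizer G x0).subtype T'.obj)
        ((MulAction.stabilizer G x0).subtype h * 1, ψ t) = _
      rw [mul_one]
      apply ind_sound
      exact ⟨h, by simp, rfl⟩
    refine ⟨show T ⟶ T' from ObjectProperty.homMk ⟨ψ, hψeq⟩, ?_⟩
    apply CostructuredArrow.hom_ext
    apply ObjectProperty.hom_ext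
    show indMap (MulAction.stabilizer G x0).subtype (⟨ψ, hψeq⟩ : T.obj ⟶ T'.obj) = m.left.hom
    apply OrbHom.ext
    funext z
    induction z using Quotient.ind with
    | _ p =>
      obtain ⟨g, t⟩ := p
      have e3 : (Quotient.mk (indSetoid (MulAction.stabilizer G x0).subtype T.obj) (g, t)) =
          g • Quotient.mk (indSetoid (MulAction.stabilizer G x0).subtype T.obj) ((1 : G), t) := by
        rw [indSmul_mk, mul_one]
      rw [indMap_mk]
      refine Eq.symm ((congrArg (m.left.hom : OrbHom _ _).toFun e3).trans
        ((((m.left.hom : OrbHom _ _).map_smul _ _).trans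
          (congrArg (fun z => g • z) (hψ t))).trans ?_))
      show Quotient.mk (indSetoid (MulAction.stabilizer G x0).subtype T'.obj) (g * 1, ψ t) = _
      rw [mul_one]

instance Phi_essSurj : (Phi 𝓕' 𝓕 hsub X x0).EssSurj := by
  constructor
  intro Y
  obtain ⟨A, e, rfl⟩ := CostructuredArrow.mk_surjective Y
  set Hs := MulAction.stabilizer G x0 with hHs
  let ee : OrbHom A.obj X.obj := e.hom
  letI act : MulAction ↥Hs {a : A.obj.α // ee.toFun a = x0} :=
    { smul := fun h a => ⟨(h : G) • a.1, by
        rw [ee.map_smul, a.2]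
        exact MulAction.mem_stabilizer_iff.mp h.2⟩
      one_smul := fun a => Subtype.ext (by
        show ((1 : ↥Hs) : G) • a.1 = a.1
        simp)
      mul_smul := fun h h' a => Subtype.ext (by
        show ((h * h' : ↥Hs) : G) • a.1 = (h : G) • ((h' : G) • a.1)
        simp [mul_smul]) }
  let T : GOrb ↥Hs :=
    { α := {a : A.obj.α // ee.toFun a = x0}
      pretrans := ⟨fun a b => by
        obtain ⟨g, hg⟩ := A.obj.pretrans.exists_smul_eq a.1 b.1
        have hgH : g ∈ Hs := by
          rw [hHs, MulAction.mem_stabilizer_iff]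
          conv_lhs => rw [← a.2]
          rw [← ee.map_smul, hg, b.2]
        exact ⟨⟨g, hgH⟩, Subtype.ext hg⟩⟩
      nonempty := by
        obtain ⟨a0⟩ := A.obj.nonempty
        obtain ⟨g, hg⟩ := X.obj.pretrans.exists_smul_eq (ee.toFun a0) x0
        exact ⟨⟨g • a0, by rw [ee.map_smul, hg]⟩⟩ }
  have hprop : ∀ t : T.α, MulAction.stabilizer ↥Hs t ∈ (comapFam Hs.subtype 𝓕').carrier := by
    intro t
    have hle : (MulAction.stabilizer ↥Hs t).map Hs.subtype ≤ MulAction.stabilizer G t.1 := by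
      intro k hk
      obtain ⟨h, hh, rfl⟩ := Subgroup.mem_map.mp hk
      rw [MulAction.mem_stabilizer_iff]
      exact congrArg Subtype.val (MulAction.mem_stabilizer_iff.mp hh)
    exact 𝓕'.le_mem _ _ hle (A.property t.1)
  let θ : indObj Hs.subtype T ⟶ A.obj :=
    { toFun := Quotient.lift (fun p : G × T.α => p.1 • p.2.1) (fun p q hpq => by
        obtain ⟨h, h1, h2⟩ := (hpq :
          ∃ h : ↥Hs, p.1 = q.1 * Hs.subtype h ∧ q.2 = h • p.2)
        rw [h1, mul_smul]
        congr 1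
        exact (congrArg Subtype.val h2).symm)
      map_smul := fun a q => by
        induction q using Quotient.ind with
        | _ p => exact mul_smul a p.1 p.2.1 }
  have hθmk : ∀ p : G × T.α, θ.toFun (Quotient.mk (indSetoid Hs.subtype T) p) = p.1 • p.2.1 :=
    fun p => rfl
  have hθ : Function.Bijective θ.toFun := by
    constructor
    · intro z z'
      induction z using Quotient.ind with
      | _ p =>
        induction z' using Quotient.ind with
        | _ q =>
          intro hzz
          rw [hθmk, hθmk] at hzz
          have e1 : p.1 • x0 = q.1 • x0 := by
            conv_lhs => rw [← p.2.2, ← ee.map_smul, hzz, ee.map_smul, q.2.2]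
          have hmem : q.1⁻¹ * p.1 ∈ Hs := by
            show (q.1⁻¹ * p.1) • x0 = x0
            rw [mul_smul, e1, inv_smul_smul]
          apply ind_sound
          refine ⟨⟨q.1⁻¹ * p.1, hmem⟩, by simp, ?_⟩
          apply Subtype.ext
          show q.2.1 = (q.1⁻¹ * p.1) • p.2.1
          rw [mul_smul, hzz, inv_smul_smul]
    · intro a
      obtain ⟨g, hg⟩ := X.obj.pretrans.exists_smul_eq (ee.toFun a) x0
      refine ⟨Quotient.mk (indSetoid Hs.subtype T) (g⁻¹, ⟨g • a, by rw [ee.map_smul, hg]⟩), ?_⟩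
      rw [hθmk]
      exact inv_smul_smul g a
  have hover : θ ≫ ee = projInd x0 T := OrbHom.ext (funext fun z => by
    induction z using Quotient.ind with
    | _ p =>
      show ee.toFun (p.1 • p.2.1) = p.1 • x0
      rw [ee.map_smul, p.2.2])
  let θiso := isoOfBijective θ hθ
  refine ⟨⟨T, hprop⟩, ⟨CostructuredArrow.isoMk
    (show ((⟨indObj Hs.subtype T, ind_prop _ 𝓕' ⟨T, hprop⟩⟩ : FamOrb G 𝓕') ≅ A) from
      ObjectProperty.isoMk _ θiso) ?_⟩⟩
  exact ObjectProperty.hom_ext _ hover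

instance Phi_isEquivalence : (Phi 𝓕' 𝓕 hsub X x0).IsEquivalence := {}

end PhiSec

end FJ


namespace FJ

section ThetaSec

variable {G : Type u} [Group G] (H : Subgroup G)

/-- The canonical iso `G ≅ G ×_H H`, `g ↦ [g, 1]`. -/
def nu : selfOrb G ⟶ indObj H.subtype (selfOrb ↥H) where
  toFun g := Quotient.mk (indSetoid H.subtype (selfOrb ↥H)) (g, (1 : ↥H))
  map_smul := fun a g => by exact (indSmul_mk H.subtype (selfOrb ↥H) a (g, 1)).symm

lemma rmul_nu (h0 : ↥H) :
    rmul G (H.subtype h0) ≫ nu H = nu H ≫ indMap H.subtype (rmul ↥H h0) := by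
  apply OrbHom.ext
  funext g
  show Quotient.mk (indSetoid H.subtype (selfOrb ↥H)) (g * (H.subtype h0)⁻¹, (1 : ↥H)) =
    Quotient.mk (indSetoid H.subtype (selfOrb ↥H)) (g, 1 * h0⁻¹)
  apply ind_sound
  refine ⟨h0⁻¹, by simp, by simp [smul_eq_mul]⟩

lemma indMap_comp {S T U : GOrb ↥H} (f : S ⟶ T) (g : T ⟶ U) :
    indMap H.subtype f ≫ indMap H.subtype g = indMap H.subtype (f ≫ g) :=
  ((indOrb H.subtype).map_comp f g).symm

variable {K : Type v} [Category.{w} K]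
  (C : SingleObj G ⥤ K) (CG : GOrb G ⥤ K) (α : C ⟶ jG G ⋙ CG)

/-- The unit for the induced extension over `H`. -/
def alphaH : Bhom H.subtype ⋙ C ⟶ jG ↥H ⋙ (indOrb H.subtype ⋙ CG) where
  app x := α.app x ≫ CG.map (nu H)
  naturality := fun {x y} h0 => by
    have h1 := α.naturality (show (SingleObj.star G) ⟶ (SingleObj.star G) from H.subtype h0)
    show C.map ((Bhom H.subtype).map h0) ≫ (α.app y ≫ CG.map (nu H)) =
      (α.app x ≫ CG.map (nu H)) ≫ CG.map (indMap H.subtype (rmul ↥H (un h0)))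
    rw [← Category.assoc]
    rw [show C.map ((Bhom H.subtype).map h0) ≫ α.app y =
      α.app x ≫ CG.map (rmul G (H.subtype h0)) from h1]
    exact (Category.assoc _ _ _).trans ((congrArg (α.app x ≫ ·)
      ((CG.map_comp (rmul G (H.subtype h0)) (nu H)).symm.trans ((congrArg CG.map (rmul_nu H h0)).trans
        (CG.map_comp (nu H) (indMap H.subtype (rmul ↥H h0)))))).trans (Category.assoc _ _ _).symm)

/-- The comparison functor between comma categories over `T` and over `G ×_H T`. -/
def Theta (T : GOrb ↥H) :
    CostructuredArrow (jG ↥H) T ⥤ CostructuredArrow (jG G) (indObj H.subtype T) where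
  obj u :=
    { left := (Bhom H.subtype).obj u.left
      right := ⟨⟨⟩⟩
      hom := nu H ≫ indMap H.subtype u.hom }
  map {u u'} m :=
    { left := (Bhom H.subtype).map m.left
      right := 𝟙 _
      w := by
        have hw := CostructuredArrow.w m
        show rmul G (H.subtype m.left) ≫ (nu H ≫ indMap H.subtype u'.hom) =
          (nu H ≫ indMap H.subtype u.hom) ≫ 𝟙 _
        rw [Category.comp_id, ← Category.assoc, rmul_nu, Category.assoc]
        exact congrArg (nu H ≫ ·) ((indMap_comp H (rmul ↥H m.left) u'.hom).trans
          (congrArg (indMap H.subtype) hw)) }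
  map_id u := CostructuredArrow.hom_ext _ _ ((Bhom H.subtype).map_id u.left)
  map_comp f g := CostructuredArrow.hom_ext _ _ ((Bhom H.subtype).map_comp f.left g.left)

instance Theta_faithful (T : GOrb ↥H) : (Theta H T).Faithful where
  map_injective := by
    intro u u' m m' hmm
    have : (H.subtype m.left : G) = H.subtype m'.left := congrArg CommaMorphism.left hmm
    exact CostructuredArrow.hom_ext _ _ (Subtype.coe_injective this)

instance Theta_full (T : GOrb ↥H) : (Theta H T).Full where
  map_surjective := by
    intro u u' n
    let f : selfOrb ↥H ⟶ T := u.hom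
    let f' : selfOrb ↥H ⟶ T := u'.hom
    have hw : (jG G).map n.left ≫ (nu H ≫ indMap H.subtype f') =
        nu H ≫ indMap H.subtype f := CostructuredArrow.w n
    have h1 : (Quotient.mk (indSetoid H.subtype T) (1 * (n.left : G)⁻¹, f'.toFun 1)) =
        Quotient.mk (indSetoid H.subtype T) (1, f.toFun 1) :=
      congrArg (fun (v : selfOrb G ⟶ indObj H.subtype T) => v.toFun (1 : G)) hw
    obtain ⟨h, hh1, hh2⟩ := ind_exact H h1
    have hh1' : (1 : G) * (n.left : G)⁻¹ = (1 : G) * H.subtype h := hh1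
    have hh2' : f.toFun 1 = h • f'.toFun 1 := hh2
    have hk : (n.left : G) = H.subtype h⁻¹ := by
      rw [one_mul, one_mul] at hh1'
      rw [← inv_inv (n.left : G), hh1']
      simp
    have key : ∀ a : ↥H, f'.toFun (a * h) = f.toFun a := fun a => by
      rw [selfOrb_hom_apply f', selfOrb_hom_apply f, hh2', mul_smul]
    let hinv : ↥H := h⁻¹
    have hwm : rmul ↥H hinv ≫ f' = f := OrbHom.ext (funext fun a => by
      show f'.toFun (a * hinv⁻¹) = f.toFun a
      show f'.toFun (a * h⁻¹⁻¹) = f.toFun a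
      rw [inv_inv]
      exact key a)
    refine ⟨CostructuredArrow.homMk hinv hwm, ?_⟩
    apply CostructuredArrow.hom_ext
    show (H.subtype h⁻¹ : G) = n.left
    rw [hk]

instance Theta_essSurj (T : GOrb ↥H) : (Theta H T).EssSurj := by
  constructor
  intro v
  obtain ⟨Yl, vh0, rfl⟩ := CostructuredArrow.mk_surjective v
  let vh : selfOrb G ⟶ indObj H.subtype T := vh0
  obtain ⟨⟨g0, t0⟩, hrep⟩ := Quotient.exists_rep (vh.toFun 1)
  let u : selfOrb ↥H ⟶ T :=
    { toFun := fun h => h • t0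
      map_smul := fun a b => mul_smul a b t0 }
  have hww : rmul G g0 ≫ vh = nu H ≫ indMap H.subtype u := OrbHom.ext (funext fun a => by
    show vh.toFun (a * g0⁻¹) = Quotient.mk (indSetoid H.subtype T) (a, (1 : ↥H) • t0)
    rw [selfOrb_hom_apply vh, ← hrep]
    show Quotient.mk (indSetoid H.subtype T) ((a * g0⁻¹) * g0, t0) = _
    rw [inv_mul_cancel_right, one_smul])
  refine ⟨CostructuredArrow.mk (S := jG ↥H) (Y := SingleObj.star ↥H) u,
    ⟨CostructuredArrow.isoMk ?_ ?_⟩⟩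
  · exact
      { hom := g0
        inv := g0⁻¹
        hom_inv_id := by
          rw [SingleObj.comp_as_mul, SingleObj.id_as_one, inv_mul_cancel]
        inv_hom_id := by
          rw [SingleObj.comp_as_mul, SingleObj.id_as_one, mul_inv_cancel] }
  · exact hww

instance Theta_isEquivalence (T : GOrb ↥H) : (Theta H T).IsEquivalence := {}

end ThetaSec

section LanSec

variable {G : Type u} [Group G] (H : Subgroup G)
  {K : Type v} [Category.{w} K] [HasColimitsOfSize.{u, u + 1} K]
  (C : SingleObj G ⥤ K) (CG : GOrb G ⥤ K) (α : C ⟶ jG G ⋙ CG) [CG.IsLeftKanExtension α]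

set_option synthInstance.maxHeartbeats 1000000 in
set_option maxHeartbeats 1000000 in
lemma CH_isLKE : (indOrb H.subtype ⋙ CG).IsLeftKanExtension (alphaH H C CG α) := by
  haveI : HasColimitsOfSize.{u, u} K := hasColimitsOfSizeShrink.{u, u, u, u + 1} K
  haveI : Functor.HasPointwiseLeftKanExtension (jG G) C := fun Y => inferInstance
  have hpt := Functor.isPointwiseLeftKanExtensionOfIsLeftKanExtension CG α
  have hptH : (Functor.LeftExtension.mk (indOrb H.subtype ⋙ CG)
      (alphaH H C CG α)).IsPointwiseLeftKanExtension := by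
    intro T
    have h1 := (hpt (indObj H.subtype T)).whiskerEquivalence (Theta H T).asEquivalence
    exact IsColimit.ofIsoColimit h1 (Cocones.ext (Iso.refl _) (fun u => by
      dsimp
      show (α.app _ ≫ CG.map (nu H ≫ indMap H.subtype u.hom)) ≫ 𝟙 _ =
        (α.app _ ≫ CG.map (nu H)) ≫ CG.map (indMap H.subtype u.hom)
      exact (Category.comp_id _).trans ((whisker_eq _
        (CG.map_comp (nu H) (indMap H.subtype u.hom))).trans (Category.assoc _ _ _).symm)))
  exact hptH.isLeftKanExtension

end LanSec

end FJ

namespace FJ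

/-- if for every `H ∈ 𝓕` the assembly map `As_{𝓕'|_H, F(res^G_H C)_H}` is an
isomorphism, then the relative assembly map
`colim_{G_{𝓕'}Orb} FC_G ⟶ colim_{G_𝓕Orb} FC_G` is an isomorphism. -/
theorem statement15 {G : Type u} [Group G] (𝓕' 𝓕 : SubgroupFamily G)
    (hsub : ∀ S : Subgroup G, S ∈ 𝓕'.carrier → S ∈ 𝓕.carrier)
    {K : Type v} [Category.{w} K] [HasColimitsOfSize.{u, u + 1} K]
    {M : Type v'} [Category.{w'} M] [HasColimitsOfSize.{u, u + 1} M]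
    (F : K ⥤ M)
    (C : SingleObj G ⥤ K)
    -- `C_G`: a left Kan extension of `C` along `j^G`
    (CG : GOrb G ⥤ K) (α : C ⟶ jG G ⋙ CG) [CG.IsLeftKanExtension α]
    -- hypothesis: all assembly maps `As_{𝓕'|_H, F(res^G_H C)_H}` for `H ∈ 𝓕` are isomorphisms
    (hyp : ∀ H : Subgroup G, H ∈ 𝓕.carrier →
      ∀ (CH : GOrb ↥H ⥤ K) (αH : Bhom H.subtype ⋙ C ⟶ jG ↥H ⋙ CH),
        CH.IsLeftKanExtension αH →
        IsIso (asm (comapFam H.subtype 𝓕') (CH ⋙ F))) :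
    IsIso (relAsm 𝓕' 𝓕 hsub (CG ⋙ F)) := by
  haveI : HasColimitsOfSize.{u, u} K := hasColimitsOfSizeShrink.{u, u, u, u + 1} K
  have hrel : relAsm 𝓕' 𝓕 hsub (CG ⋙ F) =
      colimit.pre (ObjectProperty.ι _ ⋙ (CG ⋙ F) : FamOrb G 𝓕 ⥤ M)
        (famInc 𝓕' 𝓕 hsub) := by
    apply colimit.hom_ext
    intro A
    simp only [relAsm, colimit.ι_desc]
    exact (colimit.ι_pre (ObjectProperty.ι _ ⋙ (CG ⋙ F) : FamOrb G 𝓕 ⥤ M)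
      (famInc 𝓕' 𝓕 hsub) A).symm
  rw [hrel]
  apply isIso_pre_of_locally_iso
  intro X
  -- the local data
  obtain ⟨x0⟩ := X.obj.nonempty
  have hH : MulAction.stabilizer G x0 ∈ 𝓕.carrier := X.property x0
  set H := MulAction.stabilizer G x0 with hHdef
  haveI hLKE := CH_isLKE H C CG α
  have hasm : IsIso (asm (comapFam H.subtype 𝓕') ((indOrb H.subtype ⋙ CG) ⋙ F)) :=
    hyp H hH (indOrb H.subtype ⋙ CG) (alphaH H C CG α) hLKE
  -- the iso `G ×_H pt ≅ X`
  have hbij : Function.Bijective (projInd x0 (GOrb.pt ↥H)).toFun := by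
    constructor
    · intro z z'
      induction z using Quotient.ind with
      | _ p =>
        induction z' using Quotient.ind with
        | _ q =>
          intro hzz
          have hzz' : p.1 • x0 = q.1 • x0 := hzz
          have hmem : q.1⁻¹ * p.1 ∈ H := by
            show (q.1⁻¹ * p.1) • x0 = x0
            rw [mul_smul, hzz', inv_smul_smul]
          apply ind_sound
          exact ⟨⟨q.1⁻¹ * p.1, hmem⟩, by simp, rfl⟩
    · intro s
      obtain ⟨g, hg⟩ := X.obj.pretrans.exists_smul_eq x0 s
      exact ⟨Quotient.mk (indSetoid H.subtype (GOrb.pt ↥H)) (g, PUnit.unit), hg⟩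
  haveI hwiso : IsIso (projInd x0 (GOrb.pt ↥H)) :=
    ⟨⟨(isoOfBijective _ hbij).inv, (isoOfBijective _ hbij).hom_inv_id,
      (isoOfBijective _ hbij).inv_hom_id⟩⟩
  have hcomm : ∀ T : GOrb ↥H,
      indMap H.subtype (toPt T) ≫ projInd x0 (GOrb.pt ↥H) = projInd x0 T := fun T =>
    OrbHom.ext (funext fun z => by
      induction z using Quotient.ind with
      | _ p => rfl)
  -- the key factorisation
  have key : colimit.pre
        (CostructuredArrow.proj (famInc 𝓕' 𝓕 hsub) X ⋙
          (famInc 𝓕' 𝓕 hsub ⋙ (ObjectProperty.ι _ ⋙ (CG ⋙ F))))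
        (Phi 𝓕' 𝓕 hsub X x0) ≫
      colimit.desc _
        (Functor.costructuredArrowMapCocone (famInc 𝓕' 𝓕 hsub)
          (famInc 𝓕' 𝓕 hsub ⋙ (ObjectProperty.ι _ ⋙ (CG ⋙ F)))
          (ObjectProperty.ι _ ⋙ (CG ⋙ F)) (𝟙 _) X) =
      asm (comapFam H.subtype 𝓕') ((indOrb H.subtype ⋙ CG) ⋙ F) ≫
        F.map (CG.map (projInd x0 (GOrb.pt ↥H))) := by
    apply colimit.hom_ext
    intro T
    rw [colimit.ι_pre_assoc, colimit.ι_desc]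
    refine Eq.trans ?_ (Category.assoc _ _ _)
    have hasm_comp : colimit.ι ((ObjectProperty.ι _) ⋙ ((indOrb H.subtype ⋙ CG) ⋙ F) :
          FamOrb ↥H (comapFam H.subtype 𝓕') ⥤ M) T ≫
        asm (comapFam H.subtype 𝓕') ((indOrb H.subtype ⋙ CG) ⋙ F) =
        F.map (CG.map (indMap H.subtype (toPt T.obj))) := by
      exact colimit.ι_desc _ _
    refine Eq.trans ?_
      (congrArg (fun q => q ≫ F.map (CG.map (projInd x0 (GOrb.pt ↥H)))) hasm_comp).symm
    show 𝟙 _ ≫ F.map (CG.map (projInd x0 T.obj)) =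
      F.map (CG.map (indMap H.subtype (toPt T.obj))) ≫ F.map (CG.map (projInd x0 (GOrb.pt ↥H)))
    rw [Category.id_comp, ← F.map_comp, ← CG.map_comp, hcomm T.obj]
  haveI hpreiso : IsIso (colimit.pre
      (CostructuredArrow.proj (famInc 𝓕' 𝓕 hsub) X ⋙
        (famInc 𝓕' 𝓕 hsub ⋙ (ObjectProperty.ι _ ⋙ (CG ⋙ F))))
      (Phi 𝓕' 𝓕 hsub X x0)) := inferInstance
  haveI hfac : IsIso (colimit.pre
        (CostructuredArrow.proj (famInc 𝓕' 𝓕 hsub) X ⋙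
          (famInc 𝓕' 𝓕 hsub ⋙ (ObjectProperty.ι _ ⋙ (CG ⋙ F))))
        (Phi 𝓕' 𝓕 hsub X x0) ≫
      colimit.desc _
        (Functor.costructuredArrowMapCocone (famInc 𝓕' 𝓕 hsub)
          (famInc 𝓕' 𝓕 hsub ⋙ (ObjectProperty.ι _ ⋙ (CG ⋙ F)))
          (ObjectProperty.ι _ ⋙ (CG ⋙ F)) (𝟙 _) X)) := by
    rw [key]
    haveI hCG : IsIso (CG.map (projInd x0 (GOrb.pt ↥H))) :=
      Functor.map_isIso CG (projInd x0 (GOrb.pt ↥H))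
    exact IsIso.comp_isIso' hasm (Functor.map_isIso F (CG.map (projInd x0 (GOrb.pt ↥H))))
  exact IsIso.of_isIso_comp_left
    (colimit.pre
      (CostructuredArrow.proj (famInc 𝓕' 𝓕 hsub) X ⋙
        (famInc 𝓕' 𝓕 hsub ⋙ (ObjectProperty.ι _ ⋙ (CG ⋙ F))))
      (Phi 𝓕' 𝓕 hsub X x0))
    (colimit.desc _
      (Functor.costructuredArrowMapCocone (famInc 𝓕' 𝓕 hsub)
        (famInc 𝓕' 𝓕 hsub ⋙ (ObjectProperty.ι _ ⋙ (CG ⋙ F)))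
        (ObjectProperty.ι _ ⋙ (CG ⋙ F)) (𝟙 _) X))

end FJ
end

section
/- Let F be a finite group and I a filtered category, and let Γ : I → Grp be a diagram of groups. Then the canonical homomorphisms Γ_i ≀ F → (colim_I Γ) ≀ F, induced by the structure maps of the colimit, exhibit (colim_I Γ) ≀ F as the colimit of the diagram i ↦ Γ_i ≀ F in the category of groups; that is, colim_I (Γ_i ≀ F) ≅ (colim_I Γ) ≀ F. -/
/-!
Statement 19: for a finite group `F` and a filtered diagram of groups `Γ : I ⥤ Grp`, the canonical
homomorphisms `Γ_i ≀ F → (colim Γ) ≀ F` exhibit `(colim Γ) ≀ F` as the colimit of `i ↦ Γ_i ≀ F`.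

Here `G ≀ F := G^F ⋊ F` where `F` acts on `G^F = (F → G)` by `(σ · f)(x) = f (σ⁻¹ x)`, and a
colimit of `Γ` is presented by an arbitrary colimit cocone `t`; the claim is that the image
cocone under the wreath product functor is again a colimit cocone.
-/

open CategoryTheory Limits

universe u v w

noncomputable section

variable (F : Type u) [Group F]

/-- The action of `F` on `F → G` by left translation of the argument: `(σ · f) x = f (σ⁻¹ x)`. -/
def wreathAct (G : Type u) [Group G] : F →* MulAut (F → G) where
  toFun σ :=
    { toFun := fun f x => f (σ⁻¹ * x)
      invFun := fun f x => f (σ * x)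
      left_inv := fun f => by funext x; simp [mul_assoc]
      right_inv := fun f => by funext x; simp [mul_assoc]
      map_mul' := fun f g => rfl }
  map_one' := by ext f x; simp
  map_mul' σ τ := by ext f x; simp [mul_assoc]

/-- The wreath product `G ≀ F := G^F ⋊ F`. -/
def Wreath (G : Type u) [Group G] := (F → G) ⋊[wreathAct F G] F

instance (G : Type u) [Group G] : Group (Wreath F G) :=
  inferInstanceAs (Group ((F → G) ⋊[wreathAct F G] F))

/-- Functoriality of the wreath product: a homomorphism `G →* G'` induces
`G ≀ F →* G' ≀ F` by postcomposition on `G^F` and the identity on `F`. -/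
def wreathMap {G G' : Type u} [Group G] [Group G'] (f : G →* G') :
    Wreath F G →* Wreath F G' :=
  SemidirectProduct.map (MonoidHom.compLeft f F) (MonoidHom.id F)
    (fun σ => by ext g x; rfl)

/-- The wreath product functor `- ≀ F : Grp ⥤ Grp`. -/
def wreathFunctor : GrpCat.{u} ⥤ GrpCat.{u} where
  obj G := GrpCat.of (Wreath F G)
  map {G G'} f := GrpCat.ofHom (wreathMap F f.hom)
  map_id _ := rfl
  map_comp _ _ := rfl

/-! ### Auxiliary lemmas -/

theorem wreathMap_inl {G G' : Type u} [Group G] [Group G'] (f : G →* G') (g : F → G) :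
    wreathMap F f (SemidirectProduct.inl g)
      = SemidirectProduct.inl ((MonoidHom.compLeft f F) g) := rfl

theorem wreathMap_inr {G G' : Type u} [Group G] [Group G'] (f : G →* G') (σ : F) :
    wreathMap F f (SemidirectProduct.inr σ) = SemidirectProduct.inr σ :=
  SemidirectProduct.map_inr (MonoidHom.compLeft f F) (MonoidHom.id F) _ σ

/-- In a cocone over a filtered diagram of groups which is a colimit cocone, every element of
the cocone point is in the image of one of the structure maps.  (Proved abstractly, with no
universe restrictions: the union of the images is a subgroup through which the cocone factors.) -/
theorem wreath_exists_rep {I : Type v} [Category.{w} I] [IsFiltered I]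
    (Γ : I ⥤ GrpCat.{u}) (t : Cocone Γ) (ht : IsColimit t) (u : t.pt) :
    ∃ (i : I) (a : Γ.obj i), t.ι.app i a = u := by
  let R : I → Subgroup t.pt := fun i => MonoidHom.range (t.ι.app i).hom
  have dir : Directed (· ≤ ·) R := by
    intro i j
    refine ⟨IsFiltered.max i j, ?_, ?_⟩
    · rintro _ ⟨a, rfl⟩
      exact ⟨Γ.map (IsFiltered.leftToMax i j) a,
        ConcreteCategory.congr_hom (t.w (IsFiltered.leftToMax i j)) a⟩
    · rintro _ ⟨a, rfl⟩
      exact ⟨Γ.map (IsFiltered.rightToMax i j) a,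
        ConcreteCategory.congr_hom (t.w (IsFiltered.rightToMax i j)) a⟩
  set S : Subgroup t.pt := ⨆ i : I, R i with hS
  have hmem : ∀ (i : I) (a : Γ.obj i), t.ι.app i a ∈ S := fun i a =>
    le_iSup R i ⟨a, rfl⟩
  let s : Cocone Γ :=
    { pt := GrpCat.of S
      ι :=
        { app := fun i => GrpCat.ofHom
            (MonoidHom.codRestrict (t.ι.app i).hom S (hmem i))
          naturality := fun i j f => by
            ext a
            apply Subtype.ext
            exact ConcreteCategory.congr_hom (t.w f) a } }
  have key : ∀ u : t.pt, u ∈ S := by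
    intro u
    have h1 : ht.desc s ≫ GrpCat.ofHom S.subtype = 𝟙 t.pt := by
      apply ht.hom_ext
      intro i
      rw [← Category.assoc, ht.fac s i]
      ext a
      rfl
    have h2 : S.subtype (ht.desc s u) = u := ConcreteCategory.congr_hom h1 u
    rw [← h2]
    exact (ht.desc s u).2
  haveI : Nonempty I := IsFiltered.nonempty
  exact (Subgroup.mem_iSup_of_directed dir).mp (key u)

theorem compLeft_mulSingle {G G' : Type u} [Group G] [Group G'] [DecidableEq F]
    (f : G →* G') (x : F) (a : G) :
    (MonoidHom.compLeft f F) (Pi.mulSingle x a) = Pi.mulSingle x (f a) := by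
  funext y
  exact Pi.apply_mulSingle (fun _ : F => (f : G → G')) (fun _ => map_one f) x a y

theorem wreathAct_mulSingle (G : Type u) [Group G] [DecidableEq F] (σ x : F) (a : G) :
    wreathAct F G σ (Pi.mulSingle x a) = Pi.mulSingle (σ * x) a := by
  have h : ∀ y : F, (Pi.mulSingle x a : F → G) (σ⁻¹ * y)
      = (Pi.mulSingle (σ * x) a : F → G) y := by
    intro y
    rcases eq_or_ne y (σ * x) with h | h
    · subst h
      rw [Pi.mulSingle_apply, if_pos (by group), Pi.mulSingle_eq_same]
    · rw [Pi.mulSingle_apply, Pi.mulSingle_apply, if_neg h, if_neg]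
      intro hc
      exact h (by rw [← hc]; group)
  exact funext h

section Desc

variable [Fintype F] [DecidableEq F] {I : Type v} [Category.{w} I] [IsFiltered I]
  (Γ : I ⥤ GrpCat.{u}) (t : Cocone Γ) (ht : IsColimit t) (s : Cocone (Γ ⋙ wreathFunctor F))

/-- The structure maps of `t`, with their codomain normalised to `t.pt`. -/
def tApp (i : I) : Γ.obj i →* t.pt := (t.ι.app i).hom

theorem tApp_w {i j : I} (f : i ⟶ j) (a : Γ.obj i) :
    tApp Γ t j (Γ.map f a) = tApp Γ t i a :=
  ConcreteCategory.congr_hom (t.w f) a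

include ht in
theorem wreath_exists_rep' (u : t.pt) : ∃ (i : I) (a : Γ.obj i), tApp Γ t i a = u :=
  wreath_exists_rep Γ t ht u

/-- The components of `s`, viewed as homomorphisms out of the wreath products. -/
def sApp (i : I) : Wreath F (Γ.obj i) →* s.pt := (s.ι.app i).hom

theorem sApp_w {i j : I} (f : i ⟶ j) (u : Wreath F (Γ.obj i)) :
    sApp F Γ s j (wreathMap F (Γ.map f).hom u) = sApp F Γ s i u :=
  ConcreteCategory.congr_hom (s.w f) u

/-- The restriction of `s.ι.app i` to the base group `Γ_i^F`. -/
def wreathα (i : I) : (F → Γ.obj i) →* s.pt :=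
  (sApp F Γ s i).comp SemidirectProduct.inl

theorem wreathα_apply (i : I) (g : F → Γ.obj i) :
    wreathα F Γ s i g = sApp F Γ s i (SemidirectProduct.inl g) := rfl

theorem wreathα_natural {i j : I} (f : i ⟶ j) (g : F → Γ.obj i) :
    wreathα F Γ s j ((MonoidHom.compLeft (Γ.map f).hom F) g) = wreathα F Γ s i g := by
  erw [wreathα_apply, wreathα_apply, ← wreathMap_inl, sApp_w]; rfl

/-- The restriction of `s.ι.app i` to the acting group `F` (independent of `i`). -/
def wreathβ : F →* s.pt :=
  haveI : Nonempty I := IsFiltered.nonempty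
  (sApp F Γ s (Classical.arbitrary I)).comp SemidirectProduct.inr

theorem wreathβ_eq (i : I) (σ : F) :
    sApp F Γ s i (SemidirectProduct.inr σ) = wreathβ F Γ s σ := by
  haveI : Nonempty I := IsFiltered.nonempty
  have key : ∀ (i j : I),
      sApp F Γ s i (SemidirectProduct.inr σ)
        = sApp F Γ s (IsFiltered.max i j) (SemidirectProduct.inr σ) := fun i j => by
    erw [← sApp_w F Γ s (IsFiltered.leftToMax i j), wreathMap_inr]
  have key2 : ∀ (i j : I),
      sApp F Γ s j (SemidirectProduct.inr σ)
        = sApp F Γ s (IsFiltered.max i j) (SemidirectProduct.inr σ) := fun i j => by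
    erw [← sApp_w F Γ s (IsFiltered.rightToMax i j), wreathMap_inr]
  set j := Classical.arbitrary I
  rw [key i j]
  exact (key2 i j).symm

/-- The cocone over `Γ` obtained by embedding `Γ_i` into `Γ_i^F` at coordinate `x` and
then mapping into `s.pt`. -/
def wreathConeA (x : F) : Cocone Γ where
  pt := s.pt
  ι :=
    { app := fun i => GrpCat.ofHom
        ((wreathα F Γ s i).comp (MonoidHom.mulSingle (fun _ : F => Γ.obj i) x))
      naturality := fun i j f => by
        ext a
        show wreathα F Γ s j (Pi.mulSingle x (Γ.map f a)) = wreathα F Γ s i (Pi.mulSingle x a)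
        rw [← compLeft_mulSingle F (Γ.map f).hom x a,
          wreathα_natural F Γ s f] }

/-- The coordinate maps `t.pt →* s.pt` obtained from the colimit property. -/
def wreathA (x : F) : (t.pt : Type u) →* s.pt :=
  (ht.desc (wreathConeA F Γ s x)).hom

theorem wreathA_fac (x : F) (i : I) (a : Γ.obj i) :
    wreathA F Γ t ht s x (tApp Γ t i a) = wreathα F Γ s i (Pi.mulSingle x a) :=
  ConcreteCategory.congr_hom (ht.fac (wreathConeA F Γ s x) i) a

theorem wreathA_commute :
    Pairwise fun x y : F => ∀ u v : t.pt,
      Commute (wreathA F Γ t ht s x u) (wreathA F Γ t ht s y v) := by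
  intro x y hxy u v
  obtain ⟨i, a, rfl⟩ := wreath_exists_rep' Γ t ht u
  obtain ⟨j, b, rfl⟩ := wreath_exists_rep' Γ t ht v
  have hu : tApp Γ t i a
      = tApp Γ t (IsFiltered.max i j) (Γ.map (IsFiltered.leftToMax i j) a) :=
    (tApp_w Γ t (IsFiltered.leftToMax i j) a).symm
  have hv : tApp Γ t j b
      = tApp Γ t (IsFiltered.max i j) (Γ.map (IsFiltered.rightToMax i j) b) :=
    (tApp_w Γ t (IsFiltered.rightToMax i j) b).symm
  rw [hu, hv, wreathA_fac, wreathA_fac]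
  exact (Pi.mulSingle_commute hxy _ _).map (wreathα F Γ s (IsFiltered.max i j))

/-- The homomorphism `(colim Γ)^F →* s.pt`. -/
def wreathαTot : (F → t.pt) →* s.pt :=
  MonoidHom.noncommPiCoprod (fun x => wreathA F Γ t ht s x) (wreathA_commute F Γ t ht s)

theorem wreathαTot_single (x : F) (u : t.pt) :
    wreathαTot F Γ t ht s (Pi.mulSingle x u) = wreathA F Γ t ht s x u :=
  MonoidHom.noncommPiCoprod_mulSingle _ _ _

theorem wreath_compat (σ : F) :
    (wreathαTot F Γ t ht s).comp (wreathAct F t.pt σ).toMonoidHom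
      = (MulAut.conj (wreathβ F Γ s σ)).toMonoidHom.comp (wreathαTot F Γ t ht s) := by
  apply MonoidHom.pi_ext
  intro x u
  obtain ⟨i, a, rfl⟩ := wreath_exists_rep' Γ t ht u
  show wreathαTot F Γ t ht s (wreathAct F t.pt σ (Pi.mulSingle x (tApp Γ t i a)))
    = MulAut.conj (wreathβ F Γ s σ) (wreathαTot F Γ t ht s (Pi.mulSingle x (tApp Γ t i a)))
  rw [wreathAct_mulSingle, wreathαTot_single, wreathαTot_single, wreathA_fac, wreathA_fac,
    MulAut.conj_apply, ← wreathβ_eq F Γ s i σ]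
  have h1 : (SemidirectProduct.inr σ : Wreath F (Γ.obj i)) *
        SemidirectProduct.inl (Pi.mulSingle x a) * (SemidirectProduct.inr σ)⁻¹
      = SemidirectProduct.inl (wreathAct F (Γ.obj i) σ (Pi.mulSingle x a)) := by
    rw [← map_inv, ← SemidirectProduct.inl_aut]
  calc wreathα F Γ s i (Pi.mulSingle (σ * x) a)
      = wreathα F Γ s i (wreathAct F (Γ.obj i) σ (Pi.mulSingle x a)) := by
        rw [wreathAct_mulSingle]
    _ = sApp F Γ s i (SemidirectProduct.inr σ * SemidirectProduct.inl (Pi.mulSingle x a) *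
            (SemidirectProduct.inr σ)⁻¹) := by
        rw [wreathα_apply, ← h1]; rfl
    _ = _ := by
        erw [map_mul, map_mul, map_inv, wreathα_apply]

/-- The descent homomorphism `(colim Γ) ≀ F →* s.pt`. -/
def wreathDesc : Wreath F t.pt →* s.pt :=
  SemidirectProduct.lift (wreathαTot F Γ t ht s) (wreathβ F Γ s) (wreath_compat F Γ t ht s)

theorem wreathDesc_inl (g : F → t.pt) :
    wreathDesc F Γ t ht s (SemidirectProduct.inl g) = wreathαTot F Γ t ht s g :=
  SemidirectProduct.lift_inl _ _ _ _

theorem wreathDesc_inr (σ : F) :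
    wreathDesc F Γ t ht s (SemidirectProduct.inr σ) = wreathβ F Γ s σ :=
  SemidirectProduct.lift_inr _ _ _ _

end Desc

theorem statement19 [Finite F] {I : Type v} [Category.{w} I] [IsFiltered I]
    (Γ : I ⥤ GrpCat.{u}) (t : Cocone Γ) (ht : IsColimit t) :
    Nonempty (IsColimit ((wreathFunctor F).mapCocone t)) := by
  letI : Fintype F := Fintype.ofFinite F
  letI : DecidableEq F := Classical.decEq F
  haveI : Nonempty I := IsFiltered.nonempty
  constructor
  refine
    { desc := fun s => GrpCat.ofHom (wreathDesc F Γ t ht s)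
      fac := fun s i => ?_
      uniq := fun s m hm => ?_ }
  · -- fac
    apply GrpCat.hom_ext
    show (wreathDesc F Γ t ht s).comp (wreathMap F (tApp Γ t i)) = sApp F Γ s i
    apply SemidirectProduct.hom_ext
    · apply MonoidHom.pi_ext
      intro x a
      show wreathDesc F Γ t ht s (wreathMap F (tApp Γ t i)
          (SemidirectProduct.inl (Pi.mulSingle x a)))
        = sApp F Γ s i (SemidirectProduct.inl (Pi.mulSingle x a))
      rw [wreathMap_inl, wreathDesc_inl, compLeft_mulSingle F (tApp Γ t i) x a,
        wreathαTot_single, wreathA_fac, wreathα_apply]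
    · ext σ
      show wreathDesc F Γ t ht s (wreathMap F (tApp Γ t i) (SemidirectProduct.inr σ))
        = sApp F Γ s i (SemidirectProduct.inr σ)
      rw [wreathMap_inr, wreathDesc_inr, wreathβ_eq F Γ s i σ]
  · -- uniq
    apply GrpCat.hom_ext
    show m.hom = wreathDesc F Γ t ht s
    have hm' : ∀ (i : I) (w : Wreath F (Γ.obj i)),
        m.hom (wreathMap F (tApp Γ t i) w)
          = sApp F Γ s i w := fun i w =>
      ConcreteCategory.congr_hom (hm i) w
    apply SemidirectProduct.hom_ext
    · apply MonoidHom.pi_ext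
      intro x u
      obtain ⟨i, a, rfl⟩ := wreath_exists_rep' Γ t ht u
      show m.hom
          (SemidirectProduct.inl (Pi.mulSingle x (tApp Γ t i a)))
        = wreathDesc F Γ t ht s (SemidirectProduct.inl (Pi.mulSingle x (tApp Γ t i a)))
      have h1 : (SemidirectProduct.inl (Pi.mulSingle x (tApp Γ t i a)) : Wreath F t.pt)
          = wreathMap F (tApp Γ t i) (SemidirectProduct.inl (Pi.mulSingle x a)) := by
        rw [wreathMap_inl, compLeft_mulSingle F (tApp Γ t i) x a]
      have h2 : m.hom
          (SemidirectProduct.inl (Pi.mulSingle x (tApp Γ t i a)))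
          = sApp F Γ s i (SemidirectProduct.inl (Pi.mulSingle x a)) := by
        rw [h1]; exact hm' i _
      rw [h2, wreathDesc_inl, wreathαTot_single, wreathA_fac, wreathα_apply]
    · ext σ
      set i₀ : I := Classical.arbitrary I
      show m.hom (SemidirectProduct.inr σ)
        = wreathDesc F Γ t ht s (SemidirectProduct.inr σ)
      have h1 : (SemidirectProduct.inr σ : Wreath F t.pt)
          = wreathMap F (tApp Γ t i₀) (SemidirectProduct.inr σ) :=
        (wreathMap_inr F _ σ).symm
      have h2 : m.hom (SemidirectProduct.inr σ)
          = sApp F Γ s i₀ (SemidirectProduct.inr σ) := by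
        rw [h1]; exact hm' i₀ _
      rw [h2, wreathDesc_inr, wreathβ_eq F Γ s i₀ σ]

end
end
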